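/- arXiv:1402.3733 — 3 statements merged into one kernel-verified Lean document; each statement's English description precedes it below -/
import Mathlib

section
/- Let D be a strongly positive, Hermitian (D(A,B) = conj(D(B,A))), biadditive (D(A ⊔ B, C) = D(A,C) + D(B,C) for disjoint A, B) and normalized (D(Ω,Ω) = 1) decoherence functional on a finite history space Ω. If μ(Z) := (D(Z,Z)).re = 0 for some Z ⊆ Ω, then μ(Zᶜ) = 1 and the partition {Z, Zᶜ} is consistent, i.e., D(Z, Zᶜ) = 0. -/
open ComplexOrder

/-- Strong positivity of a decoherence functional. -/
def StronglyPositive {Ω : Type*} (D : Set Ω → Set Ω → ℂ) : Prop :=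
  ∀ (n : ℕ) (A : Fin n → Set Ω),
    Matrix.PosSemidef (Matrix.of fun i j => D (A i) (A j))

theorem measure_zero_complement {Ω : Type*} [Fintype Ω]
    (D : Set Ω → Set Ω → ℂ)
    (hHerm : ∀ A B : Set Ω, D A B = star (D B A))
    (hAdd : ∀ A B C : Set Ω, Disjoint A B → D (A ∪ B) C = D A C + D B C)
    (hSP : StronglyPositive D)
    (hNorm : D Set.univ Set.univ = 1)
    (Z : Set Ω) (hZ : (D Z Z).re = 0) :
    (D Zᶜ Zᶜ).re = 1 ∧ D Z Zᶜ = 0 := by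
  -- D Z Z ≥ 0 hence D Z Z = 0
  have h1 := hSP 1 (fun _ => Z)
  have hZZnn : (0 : ℂ) ≤ D Z Z := by
    have := h1.dotProduct_mulVec_nonneg (fun _ => 1)
    simpa [Matrix.mulVec, dotProduct, Fin.sum_univ_one] using this
  have hZZ : D Z Z = 0 := by
    rw [Complex.le_def] at hZZnn
    apply Complex.ext <;> simp [hZ, ← hZZnn.2]
  -- 2×2 PSD matrix with A = ![Z, Zᶜ]
  have h2 := hSP 2 ![Z, Zᶜ]
  set M : Matrix (Fin 2) (Fin 2) ℂ :=
    Matrix.of fun i j => D (![Z, Zᶜ] i) (![Z, Zᶜ] j) with hM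
  have hx : dotProduct (star (![1,0] : Fin 2 → ℂ)) (M.mulVec ![1,0]) = 0 := by
    simp [hM, Matrix.mulVec, dotProduct, Fin.sum_univ_two, hZZ]
  have hMv := (h2.dotProduct_mulVec_zero_iff ![1,0]).mp hx
  have hcZ : D Zᶜ Z = 0 := by
    have := congrFun hMv 1
    simpa [hM, Matrix.mulVec, dotProduct, Fin.sum_univ_two, hZZ] using this
  have hZc : D Z Zᶜ = 0 := by rw [hHerm, hcZ, star_zero]
  refine ⟨?_, hZc⟩
  -- additivity in second argument
  have hAdd2 : ∀ A B C : Set Ω, Disjoint B C → D A (B ∪ C) = D A B + D A C := by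
    intro A B C h
    rw [hHerm, hAdd B C A h, star_add, ← hHerm, ← hHerm]
  have hu : (Z ∪ Zᶜ : Set Ω) = Set.univ := Set.union_compl_self Z
  have hd : Disjoint Z Zᶜ := disjoint_compl_right
  have : D Set.univ Set.univ = D Z Z + D Z Zᶜ + (D Zᶜ Z + D Zᶜ Zᶜ) := by
    rw [← hu, hAdd _ _ _ hd, hAdd2 _ _ _ hd, hAdd2 _ _ _ hd]
  rw [hNorm, hZZ, hZc, hcZ] at this
  simp at this
  rw [← this]
  simp
end

section
/- Every Ordered Consistent Set is a Preclusive Consistent Set: let D be a strongly positive, Hermitian, biadditive, normalized decoherence functional on finite Ω, and let C be a consistent partition of Ω such that every cell A ∈ C is ordered consistent (for every consistent history H, A ⊆ H implies μ(A) ≤ μ(H), and H ⊆ A implies μ(H) ≤ μ(A)). Then C is preclusive: no cell A ∈ C with μ(A) ≠ 0 is contained in a set Z with μ(Z) = 0. -/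
open ComplexOrder

/-- The quantum measure associated with a decoherence functional. -/
def qmeasure {Ω : Type*} (D : Set Ω → Set Ω → ℂ) (A : Set Ω) : ℝ := (D A A).re

/-- A history is consistent if it decoheres with its negation. -/
def ConsistentHistory {Ω : Type*} (D : Set Ω → Set Ω → ℂ) (H : Set Ω) : Prop :=
  D H Hᶜ = 0

section Aux

variable {Ω : Type*} (D : Set Ω → Set Ω → ℂ)

lemma aux_diag_nonneg (hSP : ∀ (n : ℕ) (A : Fin n → Set Ω),
    Matrix.PosSemidef (Matrix.of fun i j => D (A i) (A j))) (A : Set Ω) :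
    0 ≤ D A A := by
  have h := (hSP 1 (fun _ => A)).dotProduct_mulVec_nonneg (fun _ => 1)
  simpa [Matrix.mulVec, dotProduct, Fin.sum_univ_one] using h

lemma aux_offdiag_zero (hSP : ∀ (n : ℕ) (A : Fin n → Set Ω),
    Matrix.PosSemidef (Matrix.of fun i j => D (A i) (A j)))
    (Z : Set Ω) (hZ : D Z Z = 0) : D Z Zᶜ = 0 := by
  set b := D Z Zᶜ with hb
  by_contra hbne
  have hbpos : 0 < Complex.normSq b := by
    simpa [Complex.normSq_pos] using hbne
  set d := D Zᶜ Zᶜ with hd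
  -- use vector x = ![-s*b, 1]
  have key : ∀ s : ℝ, 0 ≤ d.re - 2 * s * Complex.normSq b := by
    intro s
    have h := (hSP 2 ![Z, Zᶜ]).dotProduct_mulVec_nonneg ![(-s : ℂ) * b, 1]
    have hc : D Zᶜ Z = star b := by
      have := (hSP 2 ![Z, Zᶜ]).1
      have h01 := congrFun (congrFun this 1) 0
      simpa [Matrix.conjTranspose_apply] using h01.symm
    simp only [Matrix.mulVec, dotProduct, Fin.sum_univ_two, Matrix.of_apply,
      Matrix.cons_val_zero, Matrix.cons_val_one, Matrix.head_cons, hZ, hc, ← hb, ← hd,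
      Pi.star_apply, star_mul', star_one, star_neg] at h
    have hval : -star (↑s : ℂ) * star b * (0 * (-↑s * b) + b * 1) +
        1 * (star b * (-↑s * b) + d * 1)
        = d - 2 * (s : ℂ) * (Complex.normSq b : ℂ) := by
      simp only [Complex.star_def, Complex.conj_ofReal, mul_one, zero_mul, zero_add, one_mul]
      rw [show ((Complex.normSq b : ℂ)) = (starRingEnd ℂ) b * b from
        (Complex.normSq_eq_conj_mul_self).symm ▸ rfl]
      ring
    rw [hval] at h
    have hre := (Complex.nonneg_iff.mp h).1
    simpa using hre
  have hq : Complex.normSq b ≠ 0 := ne_of_gt hbpos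
  have hkey := key ((d.re + 1) / (2 * Complex.normSq b))
  have heq : 2 * ((d.re + 1) / (2 * Complex.normSq b)) * Complex.normSq b = d.re + 1 := by
    field_simp
  linarith

end Aux


theorem ordered_consistent_set_is_preclusive {Ω : Type*} [Fintype Ω]
    (D : Set Ω → Set Ω → ℂ)
    (hHerm : ∀ A B : Set Ω, D A B = star (D B A))
    (hAdd : ∀ A B C : Set Ω, Disjoint A B → D (A ∪ B) C = D A C + D B C)
    (hSP : StronglyPositive D)
    (hNorm : D Set.univ Set.univ = 1)
    (n : ℕ) (C : Fin n → Set Ω)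
    (hDisj : ∀ i j, i ≠ j → Disjoint (C i) (C j))
    (hCover : (⋃ i, C i) = Set.univ)
    (hCons : ∀ i j, i ≠ j → D (C i) (C j) = 0)
    (hOrdered : ∀ i, ∀ H : Set Ω, ConsistentHistory D H →
      ((C i ⊆ H → qmeasure D (C i) ≤ qmeasure D H) ∧
       (H ⊆ C i → qmeasure D H ≤ qmeasure D (C i)))) :
    ∀ i, qmeasure D (C i) ≠ 0 →
      ¬ ∃ Z : Set Ω, qmeasure D Z = 0 ∧ C i ⊆ Z := by
  intro i hmu ⟨Z, hZ0, hsub⟩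
  -- D Z Z = 0
  have hnn : 0 ≤ D Z Z := aux_diag_nonneg D hSP Z
  have hZZ : D Z Z = 0 := by
    have him := (Complex.nonneg_iff.mp hnn).2
    exact Complex.ext hZ0 him.symm
  have hconsZ : ConsistentHistory D Z := aux_offdiag_zero D hSP Z hZZ
  have hle := (hOrdered i Z hconsZ).1 hsub
  have hCnn : 0 ≤ D (C i) (C i) := aux_diag_nonneg D hSP (C i)
  have : qmeasure D (C i) = 0 := by
    have := (Complex.nonneg_iff.mp hCnn).1
    unfold qmeasure at *
    rw [hZ0] at hle
    linarith
  exact hmu this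
end

section
/- The 3×3 real matrix D = [[1/3, −7/24, 7/24], [−7/24, 1/2, −7/24], [7/24, −7/24, 3/4]] is positive semidefinite, symmetric, has all diagonal entries nonnegative, and its entries sum to 1. -/
open Matrix


/-- The decoherence functional matrix of the example in the appendix. -/
noncomputable def exampleD : Matrix (Fin 3) (Fin 3) ℝ :=
  !![1/3, -7/24, 7/24; -7/24, 1/2, -7/24; 7/24, -7/24, 3/4]

theorem exampleD_is_strongly_positive_df :
    exampleD.PosSemidef ∧ exampleD.IsSymm ∧ (∀ i, 0 ≤ exampleD i i) ∧
      ∑ i, ∑ j, exampleD i j = 1 := by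
  refine ⟨posSemidef_iff_dotProduct_mulVec.mpr ⟨?_, ?_⟩, ?_, ?_, ?_⟩
  · ext i j
    fin_cases i <;> fin_cases j <;> simp [exampleD]
  · intro x
    have h : star x ⬝ᵥ exampleD.mulVec x =
        (1/3) * (x 0)^2 + (1/2) * (x 1)^2 + (3/4) * (x 2)^2
          - (7/12) * (x 0 * x 1) + (7/12) * (x 0 * x 2) - (7/12) * (x 1 * x 2) := by
      simp [exampleD, Matrix.mulVec, dotProduct, Fin.sum_univ_three]
      ring
    rw [h]
    nlinarith [sq_nonneg (x 0 - x 1), sq_nonneg (x 0 + x 2), sq_nonneg (x 1 - x 2),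
      sq_nonneg (x 0 - x 1 + x 2), sq_nonneg (x 0), sq_nonneg (x 1), sq_nonneg (x 2)]
  · ext i j
    fin_cases i <;> fin_cases j <;> simp [exampleD]
  · intro i
    fin_cases i <;> norm_num [exampleD]
  · simp [exampleD, Fin.sum_univ_three]
    norm_num
end
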